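/- The Craig representation of the Gaussian Q-function: for x ≥ 0, Q(x) = (1/π)∫₀^{π/2} exp(−x²/(2 sin²ψ)) dψ. -/

import Mathlib

open MeasureTheory Real

/-- The Gaussian Q-function. -/
noncomputable def gaussianQ (x : ℝ) : ℝ :=
  (1 / Real.sqrt (2 * Real.pi)) * ∫ t in Set.Ioi x, Real.exp (-t ^ 2 / 2)

namespace CraigAux
open Set Filter intervalIntegral

lemma f_int : Integrable (fun t : ℝ => Real.exp (-t^2/2)) := by
  have h := integrable_exp_neg_mul_sq (by norm_num : (0:ℝ) < 1/2)
  convert h using 2 with t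
  ring

lemma f_cont : Continuous (fun t : ℝ => Real.exp (-t^2/2)) := by
  continuity

lemma f_Ioi0 : ∫ t in Ioi (0:ℝ), Real.exp (-t^2/2) = Real.sqrt (2*π)/2 := by
  have h := integral_gaussian_Ioi (1/2)
  have h2 : ∀ t:ℝ, -(1/2) * t^2 = -t^2/2 := fun t => by ring
  simp_rw [h2] at h
  rw [h, show π / (1/2:ℝ) = 2*π by ring]

noncomputable def L (x : ℝ) : ℝ := ∫ t in Ioi x, Real.exp (-t^2/2)

lemma L_eq (x : ℝ) : L x = L 0 - ∫ t in (0:ℝ)..x, Real.exp (-t^2/2) := by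
  have h := integral_Iic_sub_Iic (f_int.integrableOn (s := Iic 0)) (f_int.integrableOn (s := Iic x))
  have h0 := integral_Iic_add_Ioi (μ := volume) (b := (0:ℝ)) (f_int.integrableOn) (f_int.integrableOn)
  have hx := integral_Iic_add_Ioi (μ := volume) (b := x) (f_int.integrableOn) (f_int.integrableOn)
  unfold L
  linarith

lemma L_hasDeriv (x : ℝ) : HasDerivAt L (-(Real.exp (-x^2/2))) x := by
  have h : HasDerivAt (fun u => ∫ t in (0:ℝ)..u, Real.exp (-t^2/2)) (Real.exp (-x^2/2)) x :=
    intervalIntegral.integral_hasDerivAt_right (f_int.intervalIntegrable)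
      (f_cont.stronglyMeasurableAtFilter _ _) f_cont.continuousAt
  have : HasDerivAt (fun u => L 0 - ∫ t in (0:ℝ)..u, Real.exp (-t^2/2)) (0 - Real.exp (-x^2/2)) x :=
    (hasDerivAt_const _ _).sub h
  simp only [zero_sub] at this
  exact this.congr_of_eventuallyEq (Filter.Eventually.of_forall fun u => (L_eq u))

lemma L_cont : Continuous L := by
  have : Continuous (fun u : ℝ => ∫ t in (0:ℝ)..u, Real.exp (-t^2/2)) :=
    intervalIntegral.continuous_primitive (fun a b => f_int.intervalIntegrable) 0
  have h2 : Continuous (fun u => L 0 - ∫ t in (0:ℝ)..u, Real.exp (-t^2/2)) :=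
    continuous_const.sub this
  exact h2.congr fun u => (L_eq u).symm

noncomputable def R (x : ℝ) : ℝ := ∫ ψ in (0:ℝ)..(π/2), Real.exp (-x^2/(2*Real.sin ψ^2))

lemma g_meas (x : ℝ) : Measurable (fun ψ : ℝ => Real.exp (-x^2/(2*Real.sin ψ^2))) := by
  apply Real.measurable_exp.comp
  exact (measurable_const.div ((Real.measurable_sin.pow_const 2).const_mul 2))

lemma g_le_one (x ψ : ℝ) : Real.exp (-x^2/(2*Real.sin ψ^2)) ≤ 1 := by
  rw [Real.exp_le_one_iff]
  apply div_nonpos_of_nonpos_of_nonneg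
  · simp [sq_nonneg x]
  · positivity

lemma R_zero : R 0 = π/2 := by
  unfold R
  simp

lemma R_cont : Continuous R := by
  unfold R
  have hle : (0:ℝ) ≤ π/2 := by positivity
  simp only [intervalIntegral.integral_of_le hle]
  apply MeasureTheory.continuous_of_dominated (bound := fun _ => (1:ℝ))
  · exact fun x => ((g_meas x).aestronglyMeasurable)
  · intro x
    filter_upwards with ψ
    rw [Real.norm_eq_abs, abs_of_pos (Real.exp_pos _)]
    exact g_le_one x ψ
  · rw [MeasureTheory.integrable_const_iff]
    right
    rw [isFiniteMeasure_restrict]; simp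
  · filter_upwards with ψ
    by_cases h : Real.sin ψ = 0
    · simpa [h] using continuous_const
    · have : Continuous fun x : ℝ => -x^2/(2*Real.sin ψ^2) := by
        apply Continuous.div_const
        continuity
      exact Real.continuous_exp.comp this

lemma phi_image {p : ℝ} (hp : 0 < p) :
    (fun ψ => p * (Real.cos ψ / Real.sin ψ)) '' Ioo 0 (π/2) = Ioi 0 := by
  apply Set.eq_of_subset_of_subset
  · rintro t ⟨ψ, ⟨h1, h2⟩, rfl⟩
    have hs : 0 < Real.sin ψ := Real.sin_pos_of_pos_of_lt_pi h1 (lt_of_le_of_lt h2.le (by linarith [Real.pi_pos]))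
    have hc : 0 < Real.cos ψ := Real.cos_pos_of_mem_Ioo ⟨by linarith [Real.pi_pos], h2⟩
    exact mul_pos hp (div_pos hc hs)
  · rintro t (ht : 0 < t)
    refine ⟨Real.arctan (p/t), ⟨by
      have := Real.arctan_strictMono (div_pos hp ht)
      simpa [Real.arctan_zero] using this, Real.arctan_lt_pi_div_two _⟩, ?_⟩
    simp only [Real.cos_arctan, Real.sin_arctan]
    have h1 : Real.sqrt (1 + (p/t)^2) > 0 := by positivity
    have hpt : p / t ≠ 0 := (div_pos hp ht).ne'
    field_simp

lemma phi_deriv {p : ℝ} (hp : 0 < p) {ψ : ℝ} (hψ : ψ ∈ Ioo 0 (π/2)) :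
    HasDerivAt (fun ψ => p * (Real.cos ψ / Real.sin ψ)) (-(p / Real.sin ψ^2)) ψ := by
  have hs : 0 < Real.sin ψ := Real.sin_pos_of_pos_of_lt_pi hψ.1 (lt_of_le_of_lt hψ.2.le (by linarith [Real.pi_pos]))
  have h := ((Real.hasDerivAt_cos ψ).div (Real.hasDerivAt_sin ψ) hs.ne').const_mul p
  refine h.congr_deriv ?_
  have h3 : -Real.sin ψ * Real.sin ψ - Real.cos ψ * Real.cos ψ = -1 := by
    nlinarith [Real.sin_sq_add_cos_sq ψ]
  rw [h3]
  ring

lemma phi_inj {p : ℝ} (hp : 0 < p) : InjOn (fun ψ => p * (Real.cos ψ / Real.sin ψ)) (Ioo 0 (π/2)) := by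
  intro a ha b hb hab
  have h : ∀ ψ, ψ ∈ Ioo (0:ℝ) (π/2) → Real.cos ψ / Real.sin ψ = Real.tan (π/2 - ψ) := by
    intro ψ hψ
    rw [Real.tan_pi_div_two_sub, Real.tan_eq_sin_div_cos, inv_div]
  simp only [h a ha, h b hb] at hab
  have hab2 : Real.tan (π/2 - a) = Real.tan (π/2 - b) := mul_left_cancel₀ hp.ne' hab
  have hmem : ∀ ψ, ψ ∈ Ioo (0:ℝ) (π/2) → π/2 - ψ ∈ Ioo (-(π/2)) (π/2) := by
    intro ψ hψ
    constructor <;> [linarith [hψ.2, Real.pi_pos]; linarith [hψ.1]]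
  have := Real.injOn_tan (hmem a ha) (hmem b hb) hab2
  linarith

lemma subst_integral {p : ℝ} (hp : 0 < p) :
    ∫ ψ in (0:ℝ)..(π/2), (-(p/Real.sin ψ^2) * Real.exp (-p^2/(2*Real.sin ψ^2)))
      = -(Real.exp (-p^2/2) * (Real.sqrt (2*π)/2)) := by
  have key := integral_image_eq_integral_abs_deriv_smul measurableSet_Ioo
    (fun ψ hψ => (phi_deriv hp hψ).hasDerivWithinAt) (phi_inj hp)
    (fun t => Real.exp (-t^2/2))
  rw [phi_image hp, f_Ioi0] at key
  rw [intervalIntegral.integral_of_le (by positivity : (0:ℝ) ≤ π/2),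
      MeasureTheory.integral_Ioc_eq_integral_Ioo]
  have congr1 : ∀ ψ ∈ Ioo (0:ℝ) (π/2),
      -(p/Real.sin ψ^2) * Real.exp (-p^2/(2*Real.sin ψ^2))
        = (-(Real.exp (-p^2/2))) * (|(-(p / Real.sin ψ^2))| • Real.exp (-(p*(Real.cos ψ/Real.sin ψ))^2/2)) := by
    intro ψ hψ
    have hs : 0 < Real.sin ψ :=
      Real.sin_pos_of_pos_of_lt_pi hψ.1 (lt_of_le_of_lt hψ.2.le (by linarith [Real.pi_pos]))
    have habs : |(-(p / Real.sin ψ^2))| = p / Real.sin ψ^2 := by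
      rw [abs_neg, abs_of_pos (div_pos hp (by positivity))]
    rw [habs, smul_eq_mul]
    have hexp : Real.exp (-p^2/(2*Real.sin ψ^2))
        = Real.exp (-p^2/2) * Real.exp (-(p*(Real.cos ψ/Real.sin ψ))^2/2) := by
      rw [← Real.exp_add]
      congr 1
      have h2 := Real.sin_sq_add_cos_sq ψ
      field_simp
      linear_combination h2
    rw [hexp]
    ring
  rw [MeasureTheory.setIntegral_congr_fun measurableSet_Ioo congr1,
      MeasureTheory.integral_const_mul, ← key]
  ring

lemma sin_pos_of_uIoc {ψ : ℝ} (hψ : ψ ∈ Set.uIoc (0:ℝ) (π/2)) : 0 < Real.sin ψ := by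
  rw [Set.uIoc_of_le (by positivity : (0:ℝ) ≤ π/2)] at hψ
  exact Real.sin_pos_of_pos_of_lt_pi hψ.1 (lt_of_le_of_lt hψ.2 (by linarith [Real.pi_pos]))

lemma R_hasDeriv {p : ℝ} (hp : 0 < p) :
    HasDerivAt R (-(Real.exp (-p^2/2) * (Real.sqrt (2*π)/2))) p := by
  have main := intervalIntegral.hasDerivAt_integral_of_dominated_loc_of_deriv_le
    (μ := volume) (F := fun x ψ => Real.exp (-x^2/(2*Real.sin ψ^2)))
    (F' := fun x ψ => -(x/Real.sin ψ^2) * Real.exp (-x^2/(2*Real.sin ψ^2)))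
    (x₀ := p) (a := 0) (b := π/2) (bound := fun _ => 4/p) (s := Metric.ball p (p/2)) (Metric.ball_mem_nhds p (half_pos hp))
    ?_ ?_ ?_ ?_ ?_ ?_
  · rw [subst_integral hp] at main
    exact main.2
  · exact Filter.Eventually.of_forall fun x => ((g_meas x).aestronglyMeasurable).restrict
  · apply IntervalIntegrable.mono_fun (_root_.intervalIntegrable_const (c := (1:ℝ)))
      ((g_meas p).aestronglyMeasurable).restrict
    filter_upwards with ψ
    rw [Real.norm_eq_abs, abs_of_pos (Real.exp_pos _), Real.norm_eq_abs, abs_one]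
    exact g_le_one p ψ
  · exact ((((measurable_const.div ((Real.measurable_sin.pow_const 2))).neg).mul
      (g_meas p)).aestronglyMeasurable).restrict
  · filter_upwards with ψ hψ x hx
    have hs : 0 < Real.sin ψ := sin_pos_of_uIoc hψ
    rw [Metric.mem_ball, Real.dist_eq, abs_sub_lt_iff] at hx
    have hx1 : p/2 < x := by linarith [hx.2]
    have hx0 : 0 < x := by linarith
    have hs2 : (0:ℝ) < Real.sin ψ^2 := by positivity
    rw [Real.norm_eq_abs, abs_mul, abs_neg, abs_of_pos (div_pos hx0 hs2),
        abs_of_pos (Real.exp_pos _)]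
    have hc : (0:ℝ) < x^2/(2*Real.sin ψ^2) := by positivity
    have he : Real.exp (-x^2/(2*Real.sin ψ^2)) ≤ (2*Real.sin ψ^2)/x^2 := by
      rw [neg_div, Real.exp_neg]
      have hce : x^2/(2*Real.sin ψ^2) ≤ Real.exp (x^2/(2*Real.sin ψ^2)) := by
        linarith [Real.add_one_le_exp (x^2/(2*Real.sin ψ^2))]
      calc (Real.exp (x^2/(2*Real.sin ψ^2)))⁻¹ ≤ (x^2/(2*Real.sin ψ^2))⁻¹ :=
            inv_anti₀ hc hce
        _ = (2*Real.sin ψ^2)/x^2 := by rw [inv_div]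
    calc x/Real.sin ψ^2 * Real.exp (-x^2/(2*Real.sin ψ^2))
        ≤ x/Real.sin ψ^2 * ((2*Real.sin ψ^2)/x^2) :=
          mul_le_mul_of_nonneg_left he (by positivity)
      _ = 2/x := by field_simp
      _ ≤ 4/p := by
          rw [div_le_div_iff₀ hx0 hp]
          linarith
  · exact _root_.intervalIntegrable_const
  · filter_upwards with ψ hψ x hx
    have hs : 0 < Real.sin ψ := sin_pos_of_uIoc hψ
    have h1 : HasDerivAt (fun x : ℝ => -x^2/(2*Real.sin ψ^2)) (-(2*x^1)/(2*Real.sin ψ^2)) x :=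
      ((hasDerivAt_pow 2 x).neg).div_const _
    have h2 := h1.exp
    refine h2.congr_deriv ?_
    have : Real.sin ψ ^ 2 ≠ 0 := by positivity
    field_simp

lemma L_eq_R {x : ℝ} (hx : 0 ≤ x) : L x = (Real.sqrt (2*π)/π) * R x := by
  set c : ℝ := Real.sqrt (2*π)/π with hc
  set Φ : ℝ → ℝ := fun y => L y - c * R y with hΦdef
  have hπ : (0:ℝ) < π := Real.pi_pos
  have hΦcont : Continuous Φ := L_cont.sub (continuous_const.mul R_cont)
  have hΦ0 : Φ 0 = 0 := by
    have hL0 : L 0 = Real.sqrt (2*π)/2 := f_Ioi0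
    simp only [hΦdef, hL0, R_zero, hc]
    field_simp
    ring
  have hΦderiv : ∀ p, 0 < p → HasDerivAt Φ 0 p := by
    intro p hp
    have h1 := L_hasDeriv p
    have h2 := ((R_hasDeriv hp).const_mul c)
    have h3 := h1.sub h2
    refine h3.congr_deriv ?_
    have hsq : Real.sqrt (2*π) * Real.sqrt (2*π) = 2*π := Real.mul_self_sqrt (by positivity)
    rw [hc]
    field_simp
    linear_combination (Real.exp (-(p^2/2))) * hsq
  suffices h : ∀ y, 0 ≤ y → Φ y = 0 by
    have := h x hx
    simp only [hΦdef] at this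
    linarith
  intro y hy
  rcases eq_or_lt_of_le hy with h|hy'
  · rw [← h]; exact hΦ0
  · have key : ∀ ε ∈ Ioc (0:ℝ) y, Φ y = Φ ε := by
      intro ε hε
      exact constant_of_has_deriv_right_zero (hΦcont.continuousOn)
        (fun t ht => (hΦderiv t (lt_of_lt_of_le hε.1 ht.1)).hasDerivWithinAt)
        y ⟨hε.2, le_refl y⟩
    have h1 : Tendsto Φ (nhdsWithin 0 (Ioi 0)) (nhds (Φ 0)) :=
      (hΦcont.tendsto 0).mono_left nhdsWithin_le_nhds
    have h2 : Tendsto Φ (nhdsWithin 0 (Ioi 0)) (nhds (Φ y)) := by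
      apply Filter.Tendsto.congr' _ tendsto_const_nhds
      filter_upwards [Ioc_mem_nhdsGT_of_mem (⟨le_refl 0, hy'⟩ : (0:ℝ) ∈ Ico 0 y)] with ε hε
      exact (key ε hε)
    rw [hΦ0] at h1
    exact (tendsto_nhds_unique h2 h1)

end CraigAux

/-- Craig's representation of the Gaussian Q-function. -/
theorem craig_representation (x : ℝ) (hx : 0 ≤ x) :
    gaussianQ x =
      (1 / Real.pi) *
        ∫ ψ in (0 : ℝ)..(Real.pi / 2), Real.exp (-x ^ 2 / (2 * Real.sin ψ ^ 2)) := by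
  have h := CraigAux.L_eq_R hx
  have hsqrt : Real.sqrt (2*π) ≠ 0 := by positivity
  have hπ : (0:ℝ) < π := Real.pi_pos
  unfold gaussianQ
  unfold CraigAux.L CraigAux.R at h
  rw [h]
  field_simp
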